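/- Let |q| < 1, |ρ| < 1, x, y ∈ S(q), and let i, j ≥ 0 be integers. Then γ_{i,j}(x,y|ρ,q) = Q_{i,j}(x,y|ρ,q) · γ_{0,0}(x,y|ρ,q). -/

import Mathlib

open Finset MeasureTheory

noncomputable section

/-- [n]_q = 1 + q + ... + q^{n-1} -/
def qNat (q : ℝ) (n : ℕ) : ℝ := ∑ j ∈ Finset.range n, q ^ j

/-- [n]_q! -/
def qFact (q : ℝ) : ℕ → ℝ
  | 0 => 1
  | n + 1 => qFact q n * qNat q (n + 1)

/-- q-binomial coefficient -/
def qBinom (q : ℝ) (n k : ℕ) : ℝ :=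
  if k ≤ n then qFact q n / (qFact q (n - k) * qFact q k) else 0

/-- q-Pochhammer symbol (a;q)_n -/
def qPoch (a q : ℝ) (n : ℕ) : ℝ := ∏ j ∈ Finset.range n, (1 - a * q ^ j)

/-- q-Pochhammer symbol (a;q)_∞ -/
def qPochInf (a q : ℝ) : ℝ := ∏' j : ℕ, (1 - a * q ^ j)

/-- continuous q-Hermite polynomials H_n(x|q) -/
def qHermite (q : ℝ) : ℕ → ℝ → ℝ
  | 0, _ => 1
  | 1, x => x
  | n + 2, x => x * qHermite q (n + 1) x - qNat q (n + 1) * qHermite q n x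

/-- big q-Hermite polynomials H_n(x|a,q) -/
def bigqHermite (q a : ℝ) : ℕ → ℝ → ℝ
  | 0, _ => 1
  | 1, x => x - a
  | n + 2, x => (x - a * q ^ (n + 1)) * bigqHermite q a (n + 1) x -
      qNat q (n + 1) * bigqHermite q a n x

/-- rescaled Al-Salam--Chihara polynomials P_n(x|y,ρ,q) -/
def ascP (q y ρ : ℝ) : ℕ → ℝ → ℝ
  | 0, _ => 1
  | 1, x => x - ρ * y
  | n + 2, x => (x - ρ * y * q ^ (n + 1)) * ascP q y ρ (n + 1) x -
      qNat q (n + 1) * (1 - ρ ^ 2 * q ^ n) * ascP q y ρ n x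

/-- generating function φ_H(x|t,q) of the q-Hermite polynomials -/
def phiH (q t x : ℝ) : ℝ := ∑' n : ℕ, t ^ n / qFact q n * qHermite q n x

/-- γ_{i,j}(x,y|ρ,q) -/
def gammaPM (q ρ : ℝ) (i j : ℕ) (x y : ℝ) : ℝ :=
  ∑' n : ℕ, ρ ^ n / qFact q n * qHermite q (n + i) x * qHermite q (n + j) y

/-- the polynomials Q_{i,j}(x,y|ρ,q) -/
def Qpoly (q ρ : ℝ) (i j : ℕ) (x y : ℝ) : ℝ :=
  ∑ s ∈ Finset.range (j + 1),
    (-1 : ℝ) ^ s * q ^ (s * (s - 1) / 2) * qBinom q j s * ρ ^ s * qHermite q (j - s) y *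
      ascP q y ρ (i + s) x / qPoch (ρ ^ 2) q (i + s)

/-- the interval S(q) = [-2/√(1-q), 2/√(1-q)] -/
def Sq (q : ℝ) : Set ℝ := Set.Icc (-(2 / Real.sqrt (1 - q))) (2 / Real.sqrt (1 - q))

/-- ω(x,y|ρ) -/
def omegaPM (x y ρ : ℝ) : ℝ :=
  (1 - ρ ^ 2) ^ 2 - 4 * ρ * (1 + ρ ^ 2) * x * y + 4 * ρ ^ 2 * (x ^ 2 + y ^ 2)

/-- l(x|a) -/
def lPM (x a : ℝ) : ℝ := (1 + a) ^ 2 - 4 * a * x ^ 2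

/-- the q-Normal density f_N(x|q) -/
def fN (q x : ℝ) : ℝ :=
  Real.sqrt ((1 - q) * (4 - (1 - q) * x ^ 2)) * qPochInf q q / (2 * Real.pi) *
    ∏' j : ℕ, lPM (x * Real.sqrt (1 - q) / 2) (q ^ (j + 1))

/-- the (q,ρ)-Conditional Normal density f_CN(x|y,ρ,q) -/
def fCN (q ρ x y : ℝ) : ℝ :=
  fN q x * qPochInf (ρ ^ 2) q /
    ∏' j : ℕ, omegaPM (x * Real.sqrt (1 - q) / 2) (y * Real.sqrt (1 - q) / 2) (ρ * q ^ j)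

/-- the (ρ,q)-bivariate Normal density f_{2D}(x,y|ρ,q) -/
def f2D (q ρ x y : ℝ) : ℝ := fCN q ρ x y * fN q y

section Basic

variable {q : ℝ}

lemma one_sub_q_pos (hq : |q| < 1) : 0 < 1 - q := by
  have := abs_lt.1 hq; linarith [this.2]

lemma qNat_eq (hq1 : q ≠ 1) (n : ℕ) : qNat q n = (1 - q ^ n) / (1 - q) := by
  have := geom_sum_eq hq1 n
  rw [qNat, this]
  rw [← neg_sub (1:ℝ) (q^n), ← neg_sub (1:ℝ) q, neg_div_neg_eq]

lemma one_sub_mul_qNat (hq1 : q ≠ 1) (n : ℕ) : (1 - q) * qNat q n = 1 - q ^ n := by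
  rw [qNat_eq hq1, mul_div_assoc', mul_comm, mul_div_assoc]
  rw [div_self (sub_ne_zero.2 (Ne.symm hq1)), mul_one]

lemma qpow_lt_one (hq : |q| < 1) {n : ℕ} (hn : n ≠ 0) : q ^ n < 1 := by
  have h1 : |q ^ n| < 1 := by
    rw [abs_pow]; exact pow_lt_one₀ (abs_nonneg q) hq hn
  exact (abs_lt.1 h1).2

lemma qNat_pos (hq : |q| < 1) {n : ℕ} (hn : n ≠ 0) : 0 < qNat q n := by
  have hq1 : q ≠ 1 := by intro h; rw [h] at hq; simp at hq
  rw [qNat_eq hq1]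
  exact div_pos (by linarith [qpow_lt_one hq hn]) (one_sub_q_pos hq)

lemma qNat_ne (hq : |q| < 1) {n : ℕ} (hn : n ≠ 0) : qNat q n ≠ 0 :=
  (qNat_pos hq hn).ne'

lemma abs_geom_sum_le (hq : |q| < 1) (n : ℕ) : |∑ j ∈ Finset.range n, q ^ j| ≤ (1 - |q|)⁻¹ := by
  calc |∑ j ∈ Finset.range n, q ^ j| ≤ ∑ j ∈ Finset.range n, |q| ^ j := by
        refine (Finset.abs_sum_le_sum_abs _ _).trans_eq ?_
        simp [abs_pow]
      _ ≤ (1 - |q|)⁻¹ := by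
        have hq1 : |q| ≠ 1 := hq.ne
        rw [geom_sum_eq hq1, ← neg_sub (1:ℝ) (|q|^n), ← neg_sub (1:ℝ) (|q|), neg_div_neg_eq]
        rw [div_le_iff₀ (one_sub_q_pos (by rwa [abs_abs]))]
        have h1 : 0 ≤ |q| ^ n := pow_nonneg (abs_nonneg q) n
        have h2 : (1 - |q|)⁻¹ * (1 - |q|) = 1 :=
          inv_mul_cancel₀ (one_sub_q_pos (by rwa [abs_abs])).ne'
        rw [h2]; linarith

lemma qNat_abs_le (hq : |q| < 1) (n : ℕ) : |qNat q n| ≤ (1 - |q|)⁻¹ :=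
  abs_geom_sum_le hq n

lemma qNat_add (a b : ℕ) : qNat q (a + b) = qNat q a + q ^ a * qNat q b := by
  rw [qNat, qNat, qNat, Finset.sum_range_add, Finset.mul_sum]
  congr 1
  exact Finset.sum_congr rfl fun i _ => (pow_add q a i)

lemma qFact_succ (n : ℕ) : qFact q (n + 1) = qFact q n * qNat q (n + 1) := rfl

lemma qFact_pos (hq : |q| < 1) (n : ℕ) : 0 < qFact q n := by
  induction n with
  | zero => norm_num [qFact]
  | succ n ih => rw [qFact_succ]; exact mul_pos ih (qNat_pos hq n.succ_ne_zero)

lemma qFact_ne (hq : |q| < 1) (n : ℕ) : qFact q n ≠ 0 := (qFact_pos hq n).ne'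

lemma qNat_one : qNat q 1 = 1 := by simp [qNat]

lemma qFact_one : qFact q 1 = 1 := by simp [qFact_succ, qNat_one, qFact]

end Basic
section Binom

variable {q : ℝ}

lemma qBinom_of_le (h : k ≤ n) : qBinom q n k = qFact q n / (qFact q (n - k) * qFact q k) :=
  if_pos h

lemma qBinom_eq_zero {n k : ℕ} (h : n < k) : qBinom q n k = 0 := if_neg (by omega)

lemma qBinom_zero_right (hq : |q| < 1) (n : ℕ) : qBinom q n 0 = 1 := by
  rw [qBinom_of_le (Nat.zero_le n)]
  simp [qFact, div_self (qFact_ne hq n)]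

lemma qBinom_self (hq : |q| < 1) (n : ℕ) : qBinom q n n = 1 := by
  rw [qBinom_of_le le_rfl]
  simp [qFact, div_self (qFact_ne hq n)]

/-- q-Pascal: C(n+1,k+1) = C(n,k+1) + q^(n-k) C(n,k), for k ≤ n -/
lemma qPascal (hq : |q| < 1) {n k : ℕ} (hk : k ≤ n) :
    qBinom q (n + 1) (k + 1) = qBinom q n (k + 1) + q ^ (n - k) * qBinom q n k := by
  rcases eq_or_lt_of_le hk with rfl | hlt
  · rw [qBinom_self hq, qBinom_eq_zero (Nat.lt_succ_self k), qBinom_self hq]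
    simp
  · have hk1 : k + 1 ≤ n := hlt
    rw [qBinom_of_le (by omega), qBinom_of_le hk1, qBinom_of_le hk]
    have e1 : n + 1 - (k + 1) = n - k := by omega
    have e2 : n - k = (n - (k + 1)) + 1 := by omega
    have key : qNat q (n + 1) = qNat q (n - k) + q ^ (n - k) * qNat q (k + 1) := by
      have := qNat_add (q := q) (n - k) (k + 1)
      rwa [show n - k + (k + 1) = n + 1 by omega] at this
    rw [e1, qFact_succ n, e2, qFact_succ (n - (k+1)), qFact_succ k, ← e2]
    have h1 := qFact_ne hq n
    have h2 := qFact_ne hq (n - (k+1))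
    have h3 := qFact_ne hq k
    have h4 := qNat_ne hq (n := n - k) (by omega)
    have h5 := qNat_ne hq (n := k + 1) (by omega)
    set F1 := qFact q n with hF1
    set F2 := qFact q (n - (k + 1)) with hF2
    set F3 := qFact q k with hF3
    set N1 := qNat q (n + 1) with hN1
    set N2 := qNat q (n - k) with hN2
    set N3 := qNat q (k + 1) with hN3
    field_simp
    linear_combination key
end Binom
section Binom2

variable {q : ℝ}

/-- C(j+1,s) * [j+1-s] = [j+1] * C(j,s), for s ≤ j+1 -/
lemma qP2 (hq : |q| < 1) {j s : ℕ} (hs : s ≤ j + 1) :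
    qBinom q (j + 1) s * qNat q (j + 1 - s) = qNat q (j + 1) * qBinom q j s := by
  rcases eq_or_lt_of_le hs with rfl | hlt
  · rw [qBinom_eq_zero (Nat.lt_succ_self j)]
    simp [qNat]
  · have hsj : s ≤ j := by omega
    rw [qBinom_of_le (by omega), qBinom_of_le hsj]
    have e1 : j + 1 - s = (j - s) + 1 := by omega
    rw [e1, qFact_succ j, qFact_succ (j - s)]
    set F1 := qFact q j with hF1
    set F2 := qFact q (j - s) with hF2
    set F3 := qFact q s with hF3
    set N1 := qNat q (j + 1) with hN1
    set N2 := qNat q (j - s + 1) with hN2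
    have h1 : F1 ≠ 0 := qFact_ne hq j
    have h2 : F2 ≠ 0 := qFact_ne hq (j - s)
    have h3 : F3 ≠ 0 := qFact_ne hq s
    have h4 : N2 ≠ 0 := qNat_ne hq (Nat.succ_ne_zero _)
    field_simp

/-- (1 - q^(n+1-k)) * C(n+1,k) = (1 - q^(n+1)) * C(n,k), for k ≤ n+1 -/
lemma qP3 (hq : |q| < 1) {n k : ℕ} (hk : k ≤ n + 1) :
    (1 - q ^ (n + 1 - k)) * qBinom q (n + 1) k = (1 - q ^ (n + 1)) * qBinom q n k := by
  have hq1 : q ≠ 1 := fun h => by rw [h] at hq; simp at hq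
  rw [← one_sub_mul_qNat hq1 (n + 1 - k), ← one_sub_mul_qNat hq1 (n + 1)]
  rw [mul_assoc, mul_assoc, mul_comm (qNat q (n+1-k)) (qBinom q (n+1) k)]
  rw [qP2 hq hk]

/-- C(n+2,k+1) = C(n+1,k+1) + C(n+1,k) - (1-q^(n+1)) C(n,k)  (all k) -/
lemma qI1 (hq : |q| < 1) (n k : ℕ) :
    qBinom q (n + 2) (k + 1) =
      qBinom q (n + 1) (k + 1) + qBinom q (n + 1) k - (1 - q ^ (n + 1)) * qBinom q n k := by
  rcases le_or_gt k (n + 1) with hk | hk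
  · have hp := qPascal hq (n := n + 1) (k := k) hk
    have h3 := qP3 hq (n := n) (k := k) hk
    have : q ^ (n + 1 - k) * qBinom q (n + 1) k =
        qBinom q (n + 1) k - (1 - q ^ (n + 1)) * qBinom q n k := by
      rw [← h3]; ring
    rw [hp, this]; ring
  · rw [qBinom_eq_zero (by omega), qBinom_eq_zero (by omega), qBinom_eq_zero (by omega),
      qBinom_eq_zero (by omega)]
    ring

end Binom2
section BinomBound

variable {q : ℝ}

lemma qFact_eq_prod (k : ℕ) : qFact q k = ∏ j ∈ Finset.range k, qNat q (j + 1) := by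
  induction k with
  | zero => simp [qFact]
  | succ k ih => rw [qFact_succ, ih, Finset.prod_range_succ]

lemma qBinom_eq_prod (hq : |q| < 1) {n k : ℕ} (hk : k ≤ n) :
    qBinom q n k = (∏ j ∈ Finset.range k, qNat q (n - j)) / qFact q k := by
  induction k with
  | zero => simp [qBinom_zero_right hq, qFact]
  | succ k ih =>
    have hk' : k ≤ n := by omega
    have step : qBinom q n (k + 1) = qBinom q n k * qNat q (n - k) / qNat q (k + 1) := by
      rw [qBinom_of_le hk', qBinom_of_le (hk : k + 1 ≤ n)]
      have e1 : n - k = (n - (k + 1)) + 1 := by omega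
      rw [e1, qFact_succ (n - (k + 1)), qFact_succ k]
      have h1 := qFact_ne hq (n - (k + 1))
      have h2 := qFact_ne hq k
      have h3 := qNat_ne hq (n := (n - (k+1)) + 1) (Nat.succ_ne_zero _)
      have h4 := qNat_ne hq (n := k + 1) (Nat.succ_ne_zero _)
      field_simp
      try ring
    rw [step, ih hk', Finset.prod_range_succ, qFact_succ]
    have h2 := qFact_ne hq k
    have h4 := qNat_ne hq (n := k + 1) (Nat.succ_ne_zero _)
    field_simp
    try ring

lemma one_div_one_sub_le (hq : |q| < 1) {a : ℝ} (ha : 0 ≤ a) (hac : a ≤ |q|) :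
    (1 - a)⁻¹ ≤ Real.exp (a / (1 - |q|)) := by
  have h1a : 0 < 1 - a := by linarith [hq]
  have h1c : 0 < 1 - |q| := by linarith [hq]
  rw [inv_le_iff_one_le_mul₀ h1a]
  have he : 1 + a / (1 - |q|) ≤ Real.exp (a / (1 - |q|)) := by
    have := Real.add_one_le_exp (a / (1 - |q|)); linarith
  have key : 1 ≤ (1 + a / (1 - |q|)) * (1 - a) := by
    have expand : (1 + a / (1 - |q|)) * (1 - a) = 1 + a * (|q| - a) / (1 - |q|) := by
      field_simp; ring
    rw [expand]
    have : 0 ≤ a * (|q| - a) / (1 - |q|) :=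
      div_nonneg (mul_nonneg ha (by linarith)) h1c.le
    linarith
  calc (1:ℝ) ≤ (1 + a / (1 - |q|)) * (1 - a) := key
    _ ≤ Real.exp (a / (1 - |q|)) * (1 - a) := mul_le_mul_of_nonneg_right he h1a.le

lemma ratio_le (hq : |q| < 1) {l m : ℕ} (hl : l ≠ 0) (hlm : l ≤ m) :
    |qNat q m| / qNat q l ≤ Real.exp (2 * |q| ^ l / (1 - |q|)) := by
  have hq1 : q ≠ 1 := fun h => by rw [h] at hq; simp at hq
  have h1q : 0 < 1 - q := one_sub_q_pos hq
  set a := |q| ^ l with ha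
  have ha0 : 0 ≤ a := pow_nonneg (abs_nonneg q) l
  have hac : a ≤ |q| := by
    calc |q| ^ l ≤ |q| ^ 1 := pow_le_pow_of_le_one (abs_nonneg q) hq.le (by omega)
      _ = |q| := pow_one _
  have ha1 : a < 1 := lt_of_le_of_lt hac hq
  have hql : q ^ l ≤ a := by rw [ha, ← abs_pow]; exact le_abs_self _
  have h1l : 0 < 1 - q ^ l := by linarith
  have e : |qNat q m| / qNat q l = |1 - q ^ m| / (1 - q ^ l) := by
    rw [qNat_eq hq1 m, qNat_eq hq1 l, abs_div, abs_of_pos h1q]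
    field_simp
  have hnum : |1 - q ^ m| ≤ 1 + a := by
    calc |1 - q ^ m| ≤ |(1:ℝ)| + |q ^ m| := abs_sub _ _
      _ = 1 + |q| ^ m := by rw [abs_one, abs_pow]
      _ ≤ 1 + a := by
          have : |q| ^ m ≤ |q| ^ l := pow_le_pow_of_le_one (abs_nonneg q) hq.le hlm
          linarith
  have step1 : |1 - q ^ m| / (1 - q ^ l) ≤ (1 + a) / (1 - a) :=
    div_le_div₀ (by linarith) hnum (by linarith) (by linarith)
  have step2 : (1 + a) / (1 - a) ≤ Real.exp (2 * a / (1 - |q|)) := by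
    have hea : 1 + a ≤ Real.exp a := by have := Real.add_one_le_exp a; linarith
    have heb := one_div_one_sub_le hq ha0 hac
    calc (1 + a) / (1 - a) = (1 + a) * (1 - a)⁻¹ := div_eq_mul_inv _ _
      _ ≤ Real.exp a * Real.exp (a / (1 - |q|)) := by
          apply mul_le_mul hea heb (inv_nonneg.2 (by linarith)) (Real.exp_nonneg a)
      _ = Real.exp (a + a / (1 - |q|)) := (Real.exp_add _ _).symm
      _ ≤ Real.exp (2 * a / (1 - |q|)) := by
          apply Real.exp_le_exp.2
          have h1c : 0 < 1 - |q| := by linarith [hq]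
          rw [le_div_iff₀ h1c]
          have expand : (a + a / (1 - |q|)) * (1 - |q|) = a * (1 - |q|) + a := by
            field_simp
          rw [expand]
          nlinarith
  rw [e]; exact step1.trans step2

end BinomBound
section BinomBound2

variable {q : ℝ}

lemma geom_sum_abs_le (hq : |q| < 1) (k : ℕ) :
    ∑ j ∈ Finset.range k, |q| ^ (j + 1) ≤ |q| / (1 - |q|) := by
  have h1 : ∑ j ∈ Finset.range k, |q| ^ (j + 1) = |q| * ∑ j ∈ Finset.range k, |q| ^ j := by
    rw [Finset.mul_sum]
    exact Finset.sum_congr rfl fun j _ => by rw [pow_succ, mul_comm (|q|^j) (|q|)]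
  rw [h1, div_eq_mul_inv]
  apply mul_le_mul_of_nonneg_left ?_ (abs_nonneg q)
  have h2 : ∑ j ∈ Finset.range k, |q| ^ j ≤ (1 - |(|q|)|)⁻¹ :=
    (le_abs_self _).trans (abs_geom_sum_le (q := |q|) (by rwa [abs_abs]) k)
  rwa [abs_abs] at h2

/-- uniform bound on q-binomial coefficients -/
lemma qBinom_abs_le (hq : |q| < 1) (n k : ℕ) :
    |qBinom q n k| ≤ Real.exp (2 * |q| / (1 - |q|) ^ 2) := by
  have h1c : 0 < 1 - |q| := by
    have : (0:ℝ) ≤ |q| := abs_nonneg q; linarith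
  have hBpos : (1:ℝ) ≤ Real.exp (2 * |q| / (1 - |q|) ^ 2) := by
    rw [Real.one_le_exp_iff]
    positivity
  rcases le_or_gt k n with hk | hk
  · rw [qBinom_eq_prod hq hk]
    have hfk : qFact q k = ∏ j ∈ Finset.range k, qNat q (k - j) := by
      rw [qFact_eq_prod, ← Finset.prod_range_reflect (fun j => qNat q (j + 1)) k]
      exact Finset.prod_congr rfl fun j hj => by
        have : j < k := Finset.mem_range.1 hj
        congr 1; omega
    rw [abs_div, abs_of_pos (qFact_pos hq k), hfk, abs_prod, ← Finset.prod_div_distrib]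
    have habs : ∀ j ∈ Finset.range k, |qNat q (n - j)| / qNat q (k - j) ≤
        Real.exp (2 * |q| ^ (k - j) / (1 - |q|)) := fun j hj => by
      have hjk : j < k := Finset.mem_range.1 hj
      exact ratio_le hq (by omega) (by omega)
    calc ∏ j ∈ Finset.range k, |qNat q (n - j)| / qNat q (k - j)
        ≤ ∏ j ∈ Finset.range k, Real.exp (2 * |q| ^ (k - j) / (1 - |q|)) := by
          apply Finset.prod_le_prod ?_ habs
          intro j hj
          have hjk : j < k := Finset.mem_range.1 hj
          exact div_nonneg (abs_nonneg _) (qNat_pos hq (by omega)).le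
      _ = Real.exp (∑ j ∈ Finset.range k, 2 * |q| ^ (k - j) / (1 - |q|)) :=
          (Real.exp_sum _ _).symm
      _ ≤ Real.exp (2 * |q| / (1 - |q|) ^ 2) := by
          apply Real.exp_le_exp.2
          have e1 : ∑ j ∈ Finset.range k, 2 * |q| ^ (k - j) / (1 - |q|) =
              (2 / (1 - |q|)) * ∑ j ∈ Finset.range k, |q| ^ (k - j) := by
            rw [Finset.mul_sum]
            exact Finset.sum_congr rfl fun j _ => by ring
          have e2 : ∑ j ∈ Finset.range k, |q| ^ (k - j) =
              ∑ j ∈ Finset.range k, |q| ^ (j + 1) := by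
            rw [← Finset.sum_range_reflect (fun j => |q| ^ (j + 1)) k]
            exact Finset.sum_congr rfl fun j hj => by
              have := Finset.mem_range.1 hj
              congr 1; omega
          rw [e1, e2]
          calc (2 / (1 - |q|)) * ∑ j ∈ Finset.range k, |q| ^ (j + 1)
              ≤ (2 / (1 - |q|)) * (|q| / (1 - |q|)) :=
                mul_le_mul_of_nonneg_left (geom_sum_abs_le hq k) (by positivity)
            _ = 2 * |q| / (1 - |q|) ^ 2 := by
                rw [div_mul_div_comm]
                ring_nf
  · rw [qBinom_eq_zero hk, abs_zero]; linarith

end BinomBound2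
section Trig

variable {q : ℝ}

lemma qHermite_succ (m : ℕ) (y : ℝ) :
    qHermite q (m + 1) y = y * qHermite q m y - qNat q m * qHermite q (m - 1) y := by
  cases m with
  | zero => simp [qHermite, qNat]
  | succ m => rfl

lemma cos_helper (θ t : ℝ) :
    2 * Real.cos θ * Real.cos (t * θ) = Real.cos ((t + 1) * θ) + Real.cos ((t - 1) * θ) := by
  rw [add_mul, sub_mul, one_mul, Real.cos_add, Real.cos_sub]
  ring

/-- recurrence for the coefficient sums -/
lemma Skey (hq : |q| < 1) (θ : ℝ) (n : ℕ) :
    ∑ k ∈ Finset.range (n + 3), qBinom q (n + 2) k * Real.cos (((n : ℝ) + 2 - 2 * k) * θ) =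
      2 * Real.cos θ *
          ∑ k ∈ Finset.range (n + 2), qBinom q (n + 1) k * Real.cos (((n : ℝ) + 1 - 2 * k) * θ) -
        (1 - q ^ (n + 1)) *
          ∑ k ∈ Finset.range (n + 1), qBinom q n k * Real.cos (((n : ℝ) - 2 * k) * θ) := by
  set F : ℕ → ℝ := fun k => Real.cos (((n : ℝ) + 2 - 2 * k) * θ) with hF
  have h2 : 2 * Real.cos θ *
      ∑ k ∈ Finset.range (n + 2), qBinom q (n + 1) k * Real.cos (((n : ℝ) + 1 - 2 * k) * θ) =
      ∑ k ∈ Finset.range (n + 2), qBinom q (n + 1) k * F k +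
      ∑ k ∈ Finset.range (n + 2), qBinom q (n + 1) k * F (k + 1) := by
    rw [Finset.mul_sum, ← Finset.sum_add_distrib]
    refine Finset.sum_congr rfl fun k _ => ?_
    have hc := cos_helper θ ((n : ℝ) + 1 - 2 * k)
    have e1 : ((n : ℝ) + 1 - 2 * k + 1) = ((n : ℝ) + 2 - 2 * k) := by ring
    have e2 : ((n : ℝ) + 1 - 2 * k - 1) = ((n : ℝ) + 2 - 2 * (k + 1 : ℕ)) := by
      push_cast; ring
    rw [e1, e2] at hc
    rw [hF]
    dsimp only
    rw [← mul_assoc, mul_comm (2 * Real.cos θ) (qBinom q (n+1) k), mul_assoc, hc]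
    ring
  have h3 : ∑ k ∈ Finset.range (n + 2), (1 - q ^ (n + 1)) * qBinom q n k * F (k + 1) =
      (1 - q ^ (n + 1)) *
      ∑ k ∈ Finset.range (n + 1), qBinom q n k * Real.cos (((n : ℝ) - 2 * k) * θ) := by
    rw [Finset.sum_range_succ, qBinom_eq_zero (Nat.lt_succ_self n), Finset.mul_sum]
    simp only [mul_zero, zero_mul, add_zero]
    refine Finset.sum_congr rfl fun k _ => ?_
    have e2 : ((n : ℝ) - 2 * k) = ((n : ℝ) + 2 - 2 * ((k : ℝ) + 1)) := by ring
    rw [hF]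
    dsimp only
    rw [e2]
    push_cast
    ring
  rw [h2, ← h3, add_sub_assoc, ← Finset.sum_sub_distrib]
  have lhs_split : ∑ k ∈ Finset.range (n + 3), qBinom q (n + 2) k * F k =
      (∑ k ∈ Finset.range (n + 2), qBinom q (n + 2) (k + 1) * F (k + 1)) +
        qBinom q (n + 2) 0 * F 0 :=
    Finset.sum_range_succ' _ _
  have rhs1_split : ∑ k ∈ Finset.range (n + 2), qBinom q (n + 1) k * F k =
      (∑ k ∈ Finset.range (n + 1), qBinom q (n + 1) (k + 1) * F (k + 1)) +
        qBinom q (n + 1) 0 * F 0 :=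
    Finset.sum_range_succ' _ _
  have rhs1_ext : ∑ k ∈ Finset.range (n + 1), qBinom q (n + 1) (k + 1) * F (k + 1) =
      ∑ k ∈ Finset.range (n + 2), qBinom q (n + 1) (k + 1) * F (k + 1) := by
    rw [Finset.sum_range_succ (fun k => qBinom q (n + 1) (k + 1) * F (k + 1)) (n + 1),
      qBinom_eq_zero (by omega)]
    simp
  rw [lhs_split, rhs1_split, rhs1_ext, qBinom_zero_right hq, qBinom_zero_right hq]
  have main : ∑ k ∈ Finset.range (n + 2), qBinom q (n + 2) (k + 1) * F (k + 1) =
      ∑ k ∈ Finset.range (n + 2), qBinom q (n + 1) (k + 1) * F (k + 1) +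
      ∑ k ∈ Finset.range (n + 2),
        (qBinom q (n + 1) k * F (k + 1) - (1 - q ^ (n + 1)) * qBinom q n k * F (k + 1)) := by
    rw [← Finset.sum_add_distrib]
    refine Finset.sum_congr rfl fun k _ => ?_
    rw [qI1 hq n k]
    ring
  rw [main]
  ring

/-- trigonometric representation of rescaled q-Hermite polynomials -/
lemma qHermite_trig (hq : |q| < 1) (θ : ℝ) (n : ℕ) :
    qHermite q n (2 * (Real.sqrt (1 - q))⁻¹ * Real.cos θ) =
      ((Real.sqrt (1 - q))⁻¹) ^ n *
        ∑ k ∈ Finset.range (n + 1), qBinom q n k * Real.cos (((n : ℝ) - 2 * k) * θ) := by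
  have h1q : 0 < 1 - q := one_sub_q_pos hq
  have hq1 : q ≠ 1 := fun h => by rw [h] at hq; simp at hq
  set σ : ℝ := (Real.sqrt (1 - q))⁻¹ with hσ
  have hσsq : σ ^ 2 = (1 - q)⁻¹ := by
    rw [hσ, ← one_div, div_pow, one_pow, Real.sq_sqrt h1q.le, one_div]
  set P : ℕ → Prop := fun m => qHermite q m (2 * σ * Real.cos θ) =
      σ ^ m * ∑ k ∈ Finset.range (m + 1), qBinom q m k * Real.cos (((m : ℝ) - 2 * k) * θ)
    with hP
  suffices H : ∀ n, P n ∧ P (n + 1) from (H n).1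
  intro n
  induction n with
  | zero =>
    constructor
    · simp only [hP]
      rw [Finset.sum_range_one, qBinom_zero_right hq]
      show (1 : ℝ) = _
      push_cast
      norm_num
    · simp only [hP]
      show (2 * σ * Real.cos θ) = _
      rw [Finset.sum_range_succ, Finset.sum_range_one, qBinom_zero_right hq, qBinom_self hq]
      push_cast
      rw [show ((1 : ℝ) - 2 * 0) * θ = θ by ring, show ((1 : ℝ) - 2 * 1) * θ = -θ by ring,
        Real.cos_neg]
      ring
  | succ n ih =>
    refine ⟨ih.2, ?_⟩
    simp only [hP] at ih ⊢
    have ihn := ih.1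
    have ihn1 := ih.2
    have ec1 : ((n + 1 : ℕ) : ℝ) = (n : ℝ) + 1 := by push_cast; ring
    have ec2 : ((n + 1 + 1 : ℕ) : ℝ) = (n : ℝ) + 2 := by push_cast; ring
    simp only [ec1] at ihn1
    simp only [ec2]
    have hrec : qHermite q (n + 2) (2 * σ * Real.cos θ) =
        (2 * σ * Real.cos θ) * qHermite q (n + 1) (2 * σ * Real.cos θ) -
          qNat q (n + 1) * qHermite q n (2 * σ * Real.cos θ) := rfl
    show qHermite q (n + 2) (2 * σ * Real.cos θ) = _
    rw [hrec, ihn, ihn1]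
    have hqn : qNat q (n + 1) = (1 - q ^ (n + 1)) * σ ^ 2 := by
      rw [hσsq, qNat_eq hq1, div_eq_mul_inv]
    have key := Skey hq θ n
    have e4 : (n + 1 + 1 + 1) = n + 3 := by omega
    rw [e4]
    calc (2 * σ * Real.cos θ) *
          (σ ^ (n + 1) * ∑ k ∈ Finset.range (n + 2), qBinom q (n + 1) k *
            Real.cos (((n : ℝ) + 1 - 2 * k) * θ)) -
          qNat q (n + 1) *
          (σ ^ n * ∑ k ∈ Finset.range (n + 1), qBinom q n k * Real.cos (((n : ℝ) - 2 * k) * θ))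
        = σ ^ (n + 2) *
          (2 * Real.cos θ *
            (∑ k ∈ Finset.range (n + 2), qBinom q (n + 1) k *
              Real.cos (((n : ℝ) + 1 - 2 * k) * θ)) -
           (1 - q ^ (n + 1)) *
            ∑ k ∈ Finset.range (n + 1), qBinom q n k * Real.cos (((n : ℝ) - 2 * k) * θ)) := by
          rw [hqn]
          ring
      _ = σ ^ (n + 2) * ∑ k ∈ Finset.range (n + 3), qBinom q (n + 2) k *
            Real.cos (((n : ℝ) + 2 - 2 * k) * θ) := by rw [← key]
      _ = σ ^ (n + 1 + 1) * ∑ k ∈ Finset.range (n + 3), qBinom q (n + 1 + 1) k *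
            Real.cos (((n : ℝ) + 2 - 2 * k) * θ) := rfl

end Trig
section Summability

variable {q ρ x y : ℝ}

lemma qHermite_abs_le (hq : |q| < 1) {x : ℝ} (hx : x ∈ Sq q) (n : ℕ) :
    |qHermite q n x| ≤
      Real.exp (2 * |q| / (1 - |q|) ^ 2) * ((n : ℝ) + 1) * ((Real.sqrt (1 - q))⁻¹) ^ n := by
  have h1q : 0 < 1 - q := one_sub_q_pos hq
  have hs : 0 < Real.sqrt (1 - q) := Real.sqrt_pos.2 h1q
  set σ : ℝ := (Real.sqrt (1 - q))⁻¹ with hσ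
  have hσpos : 0 < σ := inv_pos.2 hs
  obtain ⟨hx1, hx2⟩ := hx
  have hxabs : |x| ≤ 2 * σ := by
    rw [abs_le]
    constructor
    · calc -(2 * σ) = -(2 / Real.sqrt (1 - q)) := by rw [div_eq_mul_inv]
        _ ≤ x := hx1
    · calc x ≤ 2 / Real.sqrt (1 - q) := hx2
        _ = 2 * σ := by rw [div_eq_mul_inv]
  have harg : x * Real.sqrt (1 - q) / 2 ∈ Set.Icc (-1 : ℝ) 1 := by
    constructor
    · rw [le_div_iff₀ (by norm_num : (0:ℝ) < 2)]
      have := neg_abs_le x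
      nlinarith [abs_nonneg x, mul_le_mul_of_nonneg_right hxabs hs.le,
        mul_inv_cancel₀ hs.ne']
    · rw [div_le_iff₀ (by norm_num : (0:ℝ) < 2)]
      have := le_abs_self x
      nlinarith [mul_le_mul_of_nonneg_right hxabs hs.le, mul_inv_cancel₀ hs.ne']
  set θ := Real.arccos (x * Real.sqrt (1 - q) / 2) with hθ
  have hcos : Real.cos θ = x * Real.sqrt (1 - q) / 2 := Real.cos_arccos harg.1 harg.2
  have hxeq : x = 2 * σ * Real.cos θ := by
    rw [hcos, hσ]
    field_simp
  rw [hxeq, qHermite_trig hq θ n]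
  rw [abs_mul, abs_pow, abs_of_pos hσpos]
  have hS : |∑ k ∈ Finset.range (n + 1), qBinom q n k * Real.cos (((n : ℝ) - 2 * k) * θ)| ≤
      ((n : ℝ) + 1) * Real.exp (2 * |q| / (1 - |q|) ^ 2) := by
    calc |∑ k ∈ Finset.range (n + 1), qBinom q n k * Real.cos (((n : ℝ) - 2 * k) * θ)|
      ≤ ∑ k ∈ Finset.range (n + 1), |qBinom q n k * Real.cos (((n : ℝ) - 2 * k) * θ)| :=
        Finset.abs_sum_le_sum_abs _ _
    _ ≤ ∑ k ∈ Finset.range (n + 1), Real.exp (2 * |q| / (1 - |q|) ^ 2) := by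
        apply Finset.sum_le_sum
        intro k _
        rw [abs_mul]
        calc |qBinom q n k| * |Real.cos (((n : ℝ) - 2 * k) * θ)| ≤ |qBinom q n k| * 1 :=
              mul_le_mul_of_nonneg_left (Real.abs_cos_le_one _) (abs_nonneg _)
          _ = |qBinom q n k| := mul_one _
          _ ≤ Real.exp (2 * |q| / (1 - |q|) ^ 2) := qBinom_abs_le hq n k
    _ = ((n : ℝ) + 1) * Real.exp (2 * |q| / (1 - |q|) ^ 2) := by
        rw [Finset.sum_const, Finset.card_range, nsmul_eq_mul]
        push_cast
        ring
  calc σ ^ n * |∑ k ∈ Finset.range (n + 1), qBinom q n k * Real.cos (((n : ℝ) - 2 * k) * θ)|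
      ≤ σ ^ n * (((n : ℝ) + 1) * Real.exp (2 * |q| / (1 - |q|) ^ 2)) :=
        mul_le_mul_of_nonneg_left hS (pow_nonneg hσpos.le n)
    _ = Real.exp (2 * |q| / (1 - |q|) ^ 2) * ((n : ℝ) + 1) * σ ^ n := by ring

lemma qFact_ge (hq : |q| < 1) (n : ℕ) :
    Real.exp (-(|q| / (1 - |q|) ^ 2)) * ((1 - q)⁻¹) ^ n ≤ qFact q n := by
  have h1q : 0 < 1 - q := one_sub_q_pos hq
  have h1c : 0 < 1 - |q| := by have := abs_nonneg q; have h := abs_lt.1 hq; linarith [h.2, hq]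
  have hq1 : q ≠ 1 := fun h => by rw [h] at hq; simp at hq
  rw [qFact_eq_prod]
  have step : ∀ j ∈ Finset.range n,
      Real.exp (-(|q| ^ (j + 1) / (1 - |q|))) * (1 - q)⁻¹ ≤ qNat q (j + 1) := by
    intro j _
    rw [qNat_eq hq1, div_eq_mul_inv (1 - q ^ (j + 1)) (1 - q)]
    apply mul_le_mul_of_nonneg_right ?_ (inv_nonneg.2 h1q.le)
    have ha0 : (0:ℝ) ≤ |q| ^ (j + 1) := pow_nonneg (abs_nonneg q) _
    have hac : |q| ^ (j + 1) ≤ |q| := by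
      calc |q| ^ (j + 1) ≤ |q| ^ 1 := pow_le_pow_of_le_one (abs_nonneg q) hq.le (by omega)
        _ = |q| := pow_one _
    have h1a : 0 < 1 - |q| ^ (j + 1) := by linarith [lt_of_le_of_lt hac hq]
    have hinv := one_div_one_sub_le hq ha0 hac
    have h2 : Real.exp (-(|q| ^ (j + 1) / (1 - |q|))) ≤ 1 - |q| ^ (j + 1) := by
      rw [Real.exp_neg]
      have h4 := inv_anti₀ (inv_pos.2 h1a) hinv
      rwa [inv_inv] at h4
    have h3 : q ^ (j + 1) ≤ |q| ^ (j + 1) := by rw [← abs_pow]; exact le_abs_self _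
    linarith
  calc Real.exp (-(|q| / (1 - |q|) ^ 2)) * ((1 - q)⁻¹) ^ n
      ≤ Real.exp (-(∑ j ∈ Finset.range n, |q| ^ (j + 1) / (1 - |q|))) * ((1 - q)⁻¹) ^ n := by
        apply mul_le_mul_of_nonneg_right ?_ (pow_nonneg (inv_nonneg.2 h1q.le) n)
        apply Real.exp_le_exp.2
        apply neg_le_neg
        have e1 : ∑ j ∈ Finset.range n, |q| ^ (j + 1) / (1 - |q|) =
            (∑ j ∈ Finset.range n, |q| ^ (j + 1)) / (1 - |q|) := by
          rw [Finset.sum_div]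
        rw [e1]
        calc (∑ j ∈ Finset.range n, |q| ^ (j + 1)) / (1 - |q|)
            ≤ (|q| / (1 - |q|)) / (1 - |q|) :=
              div_le_div_of_nonneg_right (geom_sum_abs_le hq n) h1c.le
          _ = |q| / (1 - |q|) ^ 2 := by rw [div_div, sq]
    _ = ∏ j ∈ Finset.range n, (Real.exp (-(|q| ^ (j + 1) / (1 - |q|))) * (1 - q)⁻¹) := by
        rw [Finset.prod_mul_distrib, Finset.prod_const, Finset.card_range, ← Real.exp_sum]
        congr 1
        rw [← Finset.sum_neg_distrib]
    _ ≤ ∏ j ∈ Finset.range n, qNat q (j + 1) :=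
        Finset.prod_le_prod (fun j _ => by positivity) step

end Summability
section Summable2

variable {q ρ x y : ℝ}

lemma summable_sq_geom {r : ℝ} (hr : |r| < 1) :
    Summable (fun n : ℕ => ((n : ℝ) + 1) ^ 2 * r ^ n) := by
  have hrn : ‖r‖ < 1 := by rwa [Real.norm_eq_abs]
  have h2 := summable_pow_mul_geometric_of_norm_lt_one (R := ℝ) 2 hrn
  have h1 := summable_pow_mul_geometric_of_norm_lt_one (R := ℝ) 1 hrn
  have h0 := summable_pow_mul_geometric_of_norm_lt_one (R := ℝ) 0 hrn
  have := (h2.add ((h1.mul_left 2))).add h0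
  apply this.congr
  intro n
  push_cast
  ring

/-- the key summability fact for the Poisson--Mehler series -/
lemma summable_gamma (hq : |q| < 1) (hρ : |ρ| < 1) (hx : x ∈ Sq q) (hy : y ∈ Sq q) (i j : ℕ) :
    Summable (fun n : ℕ =>
      ρ ^ n / qFact q n * qHermite q (n + i) x * qHermite q (n + j) y) := by
  have h1q : 0 < 1 - q := one_sub_q_pos hq
  set σ : ℝ := (Real.sqrt (1 - q))⁻¹ with hσ
  have hσpos : 0 < σ := inv_pos.2 (Real.sqrt_pos.2 h1q)
  set B : ℝ := Real.exp (2 * |q| / (1 - |q|) ^ 2) with hB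
  have hBpos : 0 < B := Real.exp_pos _
  set c : ℝ := Real.exp (-(|q| / (1 - |q|) ^ 2)) with hc
  have hcpos : 0 < c := Real.exp_pos _
  set s2 : ℝ := (1 - q)⁻¹ with hs2
  have hs2pos : 0 < s2 := inv_pos.2 h1q
  have hσsq : σ ^ 2 = s2 := by
    rw [hσ, hs2, ← one_div, div_pow, one_pow, Real.sq_sqrt h1q.le, one_div]
  set C : ℝ := B ^ 2 * σ ^ (i + j) * ((i : ℝ) + 1) * ((j : ℝ) + 1) / c with hC
  apply Summable.of_norm_bounded (g := fun n : ℕ => C * (((n : ℝ) + 1) ^ 2 * |ρ| ^ n))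
    ((summable_sq_geom (r := |ρ|) (by rwa [abs_abs])).mul_left C)
  intro n
  rw [Real.norm_eq_abs]
  have hfpos : 0 < qFact q n := qFact_pos hq n
  have habs : |ρ ^ n / qFact q n * qHermite q (n + i) x * qHermite q (n + j) y| =
      |ρ| ^ n * |qHermite q (n + i) x| * |qHermite q (n + j) y| / qFact q n := by
    rw [abs_mul, abs_mul, abs_div, abs_pow, abs_of_pos hfpos]
    ring
  rw [habs]
  have hH1 := qHermite_abs_le hq hx (n + i)
  have hH2 := qHermite_abs_le hq hy (n + j)
  have hfge := qFact_ge hq n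
  have hnum_nonneg : 0 ≤ |ρ| ^ n * |qHermite q (n + i) x| * |qHermite q (n + j) y| := by
    positivity
  have hnum_le : |ρ| ^ n * |qHermite q (n + i) x| * |qHermite q (n + j) y| ≤
      |ρ| ^ n * (B * ((n : ℝ) + i + 1) * σ ^ (n + i)) * (B * ((n : ℝ) + j + 1) * σ ^ (n + j)) := by
    have e1 : ((n + i : ℕ) : ℝ) + 1 = (n : ℝ) + i + 1 := by push_cast; ring
    have e2 : ((n + j : ℕ) : ℝ) + 1 = (n : ℝ) + j + 1 := by push_cast; ring
    rw [e1] at hH1; rw [e2] at hH2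
    have h1 : 0 ≤ |ρ| ^ n := pow_nonneg (abs_nonneg ρ) n
    have h2 : 0 ≤ B * ((n : ℝ) + i + 1) * σ ^ (n + i) := by positivity
    calc |ρ| ^ n * |qHermite q (n + i) x| * |qHermite q (n + j) y|
        ≤ |ρ| ^ n * (B * ((n : ℝ) + i + 1) * σ ^ (n + i)) * |qHermite q (n + j) y| := by
          apply mul_le_mul_of_nonneg_right ?_ (abs_nonneg _)
          exact mul_le_mul_of_nonneg_left hH1 h1
      _ ≤ |ρ| ^ n * (B * ((n : ℝ) + i + 1) * σ ^ (n + i)) *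
            (B * ((n : ℝ) + j + 1) * σ ^ (n + j)) := by
          apply mul_le_mul_of_nonneg_left hH2 (by positivity)
  calc |ρ| ^ n * |qHermite q (n + i) x| * |qHermite q (n + j) y| / qFact q n
      ≤ |ρ| ^ n * (B * ((n : ℝ) + i + 1) * σ ^ (n + i)) *
          (B * ((n : ℝ) + j + 1) * σ ^ (n + j)) / (c * s2 ^ n) :=
        div_le_div₀ (by positivity) hnum_le (by positivity) hfge
    _ = (B ^ 2 * σ ^ (i + j) / c) * (((n : ℝ) + i + 1) * ((n : ℝ) + j + 1)) * |ρ| ^ n := by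
        have hsig : σ ^ (n + i) * σ ^ (n + j) = s2 ^ n * σ ^ (i + j) := by
          rw [← pow_add, show n + i + (n + j) = 2 * n + (i + j) by omega, pow_add, pow_mul, hσsq]
        have expand : |ρ| ^ n * (B * ((n : ℝ) + i + 1) * σ ^ (n + i)) *
            (B * ((n : ℝ) + j + 1) * σ ^ (n + j)) =
            (B ^ 2 * σ ^ (i + j) * (((n : ℝ) + i + 1) * ((n : ℝ) + j + 1)) * |ρ| ^ n) * s2 ^ n := by
          linear_combination (|ρ| ^ n * B ^ 2 * ((n : ℝ) + i + 1) * ((n : ℝ) + j + 1)) * hsig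
        have hdiv : ∀ X : ℝ, X * s2 ^ n / (c * s2 ^ n) = X / c := fun X => by
          rw [mul_comm c (s2 ^ n), ← div_div,
            mul_div_cancel_right₀ _ (pow_ne_zero n hs2pos.ne')]
        rw [expand, hdiv]
        ring
    _ ≤ C * (((n : ℝ) + 1) ^ 2 * |ρ| ^ n) := by
        rw [hC]
        have key : ((n : ℝ) + i + 1) * ((n : ℝ) + j + 1) ≤
            (((i : ℝ) + 1) * ((j : ℝ) + 1)) * ((n : ℝ) + 1) ^ 2 := by
          have hn : (0:ℝ) ≤ n := Nat.cast_nonneg n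
          have hi : (0:ℝ) ≤ i := Nat.cast_nonneg i
          have hj : (0:ℝ) ≤ j := Nat.cast_nonneg j
          have k1 : (n:ℝ) + i + 1 ≤ ((i:ℝ) + 1) * ((n:ℝ) + 1) := by nlinarith
          have k2 : (n:ℝ) + j + 1 ≤ ((j:ℝ) + 1) * ((n:ℝ) + 1) := by nlinarith
          calc ((n : ℝ) + i + 1) * ((n : ℝ) + j + 1)
              ≤ (((i:ℝ) + 1) * ((n:ℝ) + 1)) * (((j:ℝ) + 1) * ((n:ℝ) + 1)) :=
                mul_le_mul k1 k2 (by positivity) (by positivity)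
            _ = (((i : ℝ) + 1) * ((j : ℝ) + 1)) * ((n : ℝ) + 1) ^ 2 := by ring
        have h1 : 0 ≤ B ^ 2 * σ ^ (i + j) / c := by positivity
        calc (B ^ 2 * σ ^ (i + j) / c) * (((n : ℝ) + i + 1) * ((n : ℝ) + j + 1)) * |ρ| ^ n
            ≤ (B ^ 2 * σ ^ (i + j) / c) *
                ((((i : ℝ) + 1) * ((j : ℝ) + 1)) * ((n : ℝ) + 1) ^ 2) * |ρ| ^ n := by
              apply mul_le_mul_of_nonneg_right ?_ (pow_nonneg (abs_nonneg ρ) n)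
              exact mul_le_mul_of_nonneg_left key h1
          _ = B ^ 2 * σ ^ (i + j) * ((i : ℝ) + 1) * ((j : ℝ) + 1) / c *
                (((n : ℝ) + 1) ^ 2 * |ρ| ^ n) := by ring

end Summable2
section GammaRec

variable {q ρ x y : ℝ}

lemma gammaPM_swap (q ρ : ℝ) (i j : ℕ) (x y : ℝ) :
    gammaPM q ρ i j x y = gammaPM q ρ j i y x := by
  unfold gammaPM
  exact tsum_congr fun n => by ring

lemma k_aux (hq : |q| < 1) (hρ : |ρ| < 1) (hx : x ∈ Sq q) (hy : y ∈ Sq q) (i j : ℕ)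
    (k : ℕ → ℝ) (h0 : k 0 = 0)
    (hs : ∀ n, k (n + 1) =
      ρ * (ρ ^ n / qFact q n * qHermite q (n + i) x * qHermite q (n + j) y)) :
    Summable k ∧ ∑' n, k n = ρ * gammaPM q ρ i j x y := by
  have hsum := (summable_gamma hq hρ hx hy i j).mul_left ρ
  have hshift : Summable (fun n => k (n + 1)) := hsum.congr (fun n => (hs n).symm)
  have hk : Summable k := (summable_nat_add_iff 1).1 hshift
  refine ⟨hk, ?_⟩
  rw [Summable.tsum_eq_zero_add hk, h0, zero_add, tsum_congr hs, tsum_mul_left]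
  rfl

lemma gammaPM_Ry0 (hq : |q| < 1) (hρ : |ρ| < 1) (hx : x ∈ Sq q) (hy : y ∈ Sq q) (i : ℕ) :
    gammaPM q ρ i 1 x y = y * gammaPM q ρ i 0 x y - ρ * gammaPM q ρ (i + 1) 0 x y := by
  set k : ℕ → ℝ := fun n =>
    ρ ^ n * qNat q n / qFact q n * qHermite q (n + i) x * qHermite q (n - 1) y with hkdef
  have h0 : k 0 = 0 := by simp [hkdef, qNat]
  have hs : ∀ n, k (n + 1) =
      ρ * (ρ ^ n / qFact q n * qHermite q (n + (i + 1)) x * qHermite q (n + 0) y) := by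
    intro n
    have efac : ρ ^ (n + 1) * qNat q (n + 1) / qFact q (n + 1) = ρ * (ρ ^ n / qFact q n) := by
      rw [qFact_succ, pow_succ]
      have h1 := qFact_ne hq n
      have h3 := qNat_ne hq (Nat.succ_ne_zero n)
      field_simp
    show ρ ^ (n + 1) * qNat q (n + 1) / qFact q (n + 1) * qHermite q (n + 1 + i) x *
        qHermite q (n + 1 - 1) y = _
    rw [show n + 1 + i = n + (i + 1) by omega, show n + 1 - 1 = n + 0 by omega, efac]
    ring
  obtain ⟨hk, hkt⟩ := k_aux hq hρ hx hy (i + 1) 0 k h0 hs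
  have hg : Summable (fun n : ℕ => ρ ^ n / qFact q n * qHermite q (n + i) x *
      qHermite q (n + 0) y) := summable_gamma hq hρ hx hy i 0
  have hpoint : ∀ n : ℕ, ρ ^ n / qFact q n * qHermite q (n + i) x * qHermite q (n + 1) y =
      y * (ρ ^ n / qFact q n * qHermite q (n + i) x * qHermite q (n + 0) y) - k n := by
    intro n
    rw [qHermite_succ n y, hkdef]
    dsimp only
    rw [Nat.add_zero]
    ring
  calc gammaPM q ρ i 1 x y
      = ∑' n, (y * (ρ ^ n / qFact q n * qHermite q (n + i) x * qHermite q (n + 0) y) - k n) :=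
        tsum_congr hpoint
    _ = (∑' n, y * (ρ ^ n / qFact q n * qHermite q (n + i) x * qHermite q (n + 0) y)) -
          ∑' n, k n := Summable.tsum_sub (hg.mul_left y) hk
    _ = y * gammaPM q ρ i 0 x y - ρ * gammaPM q ρ (i + 1) 0 x y := by
        rw [tsum_mul_left, hkt]
        rfl

lemma gammaPM_Ryp (hq : |q| < 1) (hρ : |ρ| < 1) (hx : x ∈ Sq q) (hy : y ∈ Sq q) (i j : ℕ) :
    gammaPM q ρ i (j + 2) x y = y * gammaPM q ρ i (j + 1) x y -
      qNat q (j + 1) * gammaPM q ρ i j x y -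
      ρ * q ^ (j + 1) * gammaPM q ρ (i + 1) (j + 1) x y := by
  set k : ℕ → ℝ := fun n =>
    ρ ^ n * qNat q n / qFact q n * qHermite q (n + i) x * qHermite q (n + j) y with hkdef
  have h0 : k 0 = 0 := by simp [hkdef, qNat]
  have hs : ∀ n, k (n + 1) =
      ρ * (ρ ^ n / qFact q n * qHermite q (n + (i + 1)) x * qHermite q (n + (j + 1)) y) := by
    intro n
    have efac : ρ ^ (n + 1) * qNat q (n + 1) / qFact q (n + 1) = ρ * (ρ ^ n / qFact q n) := by
      rw [qFact_succ, pow_succ]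
      have h1 := qFact_ne hq n
      have h3 := qNat_ne hq (Nat.succ_ne_zero n)
      field_simp
    show ρ ^ (n + 1) * qNat q (n + 1) / qFact q (n + 1) * qHermite q (n + 1 + i) x *
        qHermite q (n + 1 + j) y = _
    rw [show n + 1 + i = n + (i + 1) by omega, show n + 1 + j = n + (j + 1) by omega, efac]
    ring
  obtain ⟨hk, hkt⟩ := k_aux hq hρ hx hy (i + 1) (j + 1) k h0 hs
  have hg1 : Summable (fun n : ℕ => ρ ^ n / qFact q n * qHermite q (n + i) x *
      qHermite q (n + (j + 1)) y) := summable_gamma hq hρ hx hy i (j + 1)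
  have hg2 : Summable (fun n : ℕ => ρ ^ n / qFact q n * qHermite q (n + i) x *
      qHermite q (n + j) y) := summable_gamma hq hρ hx hy i j
  have hpoint : ∀ n : ℕ, ρ ^ n / qFact q n * qHermite q (n + i) x * qHermite q (n + (j + 2)) y =
      (y * (ρ ^ n / qFact q n * qHermite q (n + i) x * qHermite q (n + (j + 1)) y) -
        qNat q (j + 1) * (ρ ^ n / qFact q n * qHermite q (n + i) x * qHermite q (n + j) y)) -
      q ^ (j + 1) * k n := by
    intro n
    have e1 : n + (j + 2) = (n + j + 1) + 1 := by omega
    rw [e1, qHermite_succ (n + j + 1) y]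
    have e2 : n + j + 1 - 1 = n + j := by omega
    have e3 : n + j + 1 = n + (j + 1) := by omega
    have e4 : qNat q (n + j + 1) = qNat q (j + 1) + q ^ (j + 1) * qNat q n := by
      rw [show n + j + 1 = (j + 1) + n by omega, qNat_add]
    rw [e2, e3] at *
    rw [e4, hkdef]
    dsimp only
    ring
  calc gammaPM q ρ i (j + 2) x y
      = ∑' n, ((y * (ρ ^ n / qFact q n * qHermite q (n + i) x * qHermite q (n + (j + 1)) y) -
          qNat q (j + 1) * (ρ ^ n / qFact q n * qHermite q (n + i) x * qHermite q (n + j) y)) -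
          q ^ (j + 1) * k n) := tsum_congr hpoint
    _ = (∑' n, (y * (ρ ^ n / qFact q n * qHermite q (n + i) x * qHermite q (n + (j + 1)) y) -
          qNat q (j + 1) * (ρ ^ n / qFact q n * qHermite q (n + i) x * qHermite q (n + j) y))) -
          ∑' n, q ^ (j + 1) * k n :=
        Summable.tsum_sub ((hg1.mul_left y).sub (hg2.mul_left (qNat q (j + 1)))) (hk.mul_left _)
    _ = y * gammaPM q ρ i (j + 1) x y - qNat q (j + 1) * gammaPM q ρ i j x y -
          ρ * q ^ (j + 1) * gammaPM q ρ (i + 1) (j + 1) x y := by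
        rw [Summable.tsum_sub (hg1.mul_left y) (hg2.mul_left (qNat q (j + 1))),
          tsum_mul_left, tsum_mul_left, tsum_mul_left, hkt]
        show y * gammaPM q ρ i (j + 1) x y - qNat q (j + 1) * gammaPM q ρ i j x y -
          q ^ (j + 1) * (ρ * gammaPM q ρ (i + 1) (j + 1) x y) = _
        ring

end GammaRec
section GammaI0

variable {q ρ x y : ℝ}

lemma qPoch_succ (a q : ℝ) (n : ℕ) : qPoch a q (n + 1) = qPoch a q n * (1 - a * q ^ n) :=
  Finset.prod_range_succ _ _

lemma qPoch_factor_pos (hq : |q| < 1) (hρ : |ρ| < 1) (m : ℕ) : 0 < 1 - ρ ^ 2 * q ^ m := by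
  have h1 : ρ ^ 2 < 1 := by
    have := abs_lt.1 hρ
    nlinarith
  have h2 : |ρ ^ 2 * q ^ m| < 1 := by
    rw [abs_mul, abs_pow, abs_pow]
    have hρ2 : |ρ| ^ 2 < 1 := by nlinarith [abs_nonneg ρ]
    have hqm : |q| ^ m ≤ 1 := pow_le_one₀ (abs_nonneg q) hq.le
    calc |ρ| ^ 2 * |q| ^ m ≤ |ρ| ^ 2 * 1 :=
          mul_le_mul_of_nonneg_left hqm (pow_nonneg (abs_nonneg ρ) 2)
      _ < 1 := by rwa [mul_one]
  linarith [(abs_lt.1 h2).2]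

lemma qPoch_pos (hq : |q| < 1) (hρ : |ρ| < 1) (n : ℕ) : 0 < qPoch (ρ ^ 2) q n :=
  Finset.prod_pos fun j _ => qPoch_factor_pos hq hρ j

lemma qPoch_ne (hq : |q| < 1) (hρ : |ρ| < 1) (n : ℕ) : qPoch (ρ ^ 2) q n ≠ 0 :=
  (qPoch_pos hq hρ n).ne'

lemma gammaPM_Rx0 (hq : |q| < 1) (hρ : |ρ| < 1) (hx : x ∈ Sq q) (hy : y ∈ Sq q) (j : ℕ) :
    gammaPM q ρ 1 j x y = x * gammaPM q ρ 0 j x y - ρ * gammaPM q ρ 0 (j + 1) x y := by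
  have h := gammaPM_Ry0 (x := y) (y := x) hq hρ hy hx j
  rw [gammaPM_swap q ρ j 1 y x, gammaPM_swap q ρ j 0 y x, gammaPM_swap q ρ (j + 1) 0 y x] at h
  exact h

lemma gammaPM_Rxp (hq : |q| < 1) (hρ : |ρ| < 1) (hx : x ∈ Sq q) (hy : y ∈ Sq q) (i j : ℕ) :
    gammaPM q ρ (i + 2) j x y = x * gammaPM q ρ (i + 1) j x y -
      qNat q (i + 1) * gammaPM q ρ i j x y -
      ρ * q ^ (i + 1) * gammaPM q ρ (i + 1) (j + 1) x y := by
  have h := gammaPM_Ryp (x := y) (y := x) hq hρ hy hx j i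
  rw [gammaPM_swap q ρ j (i + 2) y x, gammaPM_swap q ρ j (i + 1) y x,
    gammaPM_swap q ρ j i y x, gammaPM_swap q ρ (j + 1) (i + 1) y x] at h
  exact h

lemma gammaPM_i0 (hq : |q| < 1) (hρ : |ρ| < 1) (hx : x ∈ Sq q) (hy : y ∈ Sq q) (i : ℕ) :
    gammaPM q ρ i 0 x y =
      ascP q y ρ i x / qPoch (ρ ^ 2) q i * gammaPM q ρ 0 0 x y := by
  set P : ℕ → Prop := fun m => gammaPM q ρ m 0 x y =
      ascP q y ρ m x / qPoch (ρ ^ 2) q m * gammaPM q ρ 0 0 x y with hP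
  suffices H : ∀ i, P i ∧ P (i + 1) from (H i).1
  intro i
  induction i with
  | zero =>
    constructor
    · simp only [hP]
      show gammaPM q ρ 0 0 x y = (1 : ℝ) / qPoch (ρ ^ 2) q 0 * gammaPM q ρ 0 0 x y
      rw [qPoch]
      simp
    · simp only [hP]
      have e1 : gammaPM q ρ 1 0 x y = x * gammaPM q ρ 0 0 x y - ρ * gammaPM q ρ 0 1 x y :=
        gammaPM_Rx0 hq hρ hx hy 0
      have e2 : gammaPM q ρ 0 1 x y = y * gammaPM q ρ 0 0 x y - ρ * gammaPM q ρ 1 0 x y :=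
        gammaPM_Ry0 hq hρ hx hy 0
      have h3 : (0:ℕ) = 0 := rfl
      have hne : (1 : ℝ) - ρ ^ 2 ≠ 0 := by
        have := qPoch_factor_pos hq hρ 0
        rw [pow_zero, mul_one] at this
        linarith
      have key : (1 - ρ ^ 2) * gammaPM q ρ 1 0 x y = (x - ρ * y) * gammaPM q ρ 0 0 x y := by
        linear_combination e1 - ρ * e2
      show gammaPM q ρ 1 0 x y = (x - ρ * y) / qPoch (ρ ^ 2) q 1 * gammaPM q ρ 0 0 x y
      have epoch : qPoch (ρ ^ 2) q 1 = 1 - ρ ^ 2 := by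
        rw [qPoch_succ, qPoch]
        simp
      rw [epoch, eq_comm, div_mul_eq_mul_div, div_eq_iff hne]
      linear_combination -key
  | succ i ih =>
    refine ⟨ih.2, ?_⟩
    simp only [hP] at ih ⊢
    obtain ⟨ihi, ihi1⟩ := ih
    have e1 := gammaPM_Rxp hq hρ hx hy i 0
    have e2 := gammaPM_Ry0 hq hρ hx hy (i + 1)
    have h3 : (1 : ℝ) - ρ ^ 2 * q ^ (i + 1) ≠ 0 := (qPoch_factor_pos hq hρ (i + 1)).ne'
    have h4 : (1 : ℝ) - ρ ^ 2 * q ^ i ≠ 0 := (qPoch_factor_pos hq hρ i).ne'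
    have hpi := qPoch_ne hq hρ i
    have hrec : (1 - ρ ^ 2 * q ^ (i + 1)) * gammaPM q ρ (i + 2) 0 x y =
        (x - ρ * y * q ^ (i + 1)) * gammaPM q ρ (i + 1) 0 x y -
          qNat q (i + 1) * gammaPM q ρ i 0 x y := by
      linear_combination e1 - ρ * q ^ (i + 1) * e2
    have hsolve : gammaPM q ρ (i + 2) 0 x y =
        ((x - ρ * y * q ^ (i + 1)) * gammaPM q ρ (i + 1) 0 x y -
          qNat q (i + 1) * gammaPM q ρ i 0 x y) / (1 - ρ ^ 2 * q ^ (i + 1)) := by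
      rw [eq_div_iff h3]
      linear_combination hrec
    have e6 : qPoch (ρ ^ 2) q (i + 2) =
        qPoch (ρ ^ 2) q i * (1 - ρ ^ 2 * q ^ i) * (1 - ρ ^ 2 * q ^ (i + 1)) := by
      rw [qPoch_succ, qPoch_succ]
    have e5 : qPoch (ρ ^ 2) q (i + 1) = qPoch (ρ ^ 2) q i * (1 - ρ ^ 2 * q ^ i) :=
      qPoch_succ _ _ _
    have e7 : ascP q y ρ (i + 2) x = (x - ρ * y * q ^ (i + 1)) * ascP q y ρ (i + 1) x -
        qNat q (i + 1) * (1 - ρ ^ 2 * q ^ i) * ascP q y ρ i x := rfl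
    rw [hsolve, ihi, ihi1, e6, e7, e5]
    field_simp

end GammaI0
section Rkey

variable {q : ℝ}

lemma triangle_succ (s : ℕ) : (s + 1) * s / 2 = s * (s - 1) / 2 + s := by
  cases s with
  | zero => rfl
  | succ t =>
    show (t + 2) * (t + 1) / 2 = (t + 1) * t / 2 + (t + 1)
    rw [show (t + 2) * (t + 1) = (t + 1) * t + (t + 1) * 2 by ring,
      Nat.add_mul_div_right _ _ (by norm_num : 0 < 2)]

lemma Rkey (hq : |q| < 1) (ρ y : ℝ) (Γ : ℕ → ℝ) (i j : ℕ) :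
    ∑ s ∈ Finset.range (j + 3), (-1 : ℝ) ^ s * q ^ (s * (s - 1) / 2) * qBinom q (j + 2) s *
        ρ ^ s * qHermite q (j + 2 - s) y * Γ (i + s) =
      y * ∑ s ∈ Finset.range (j + 2), (-1 : ℝ) ^ s * q ^ (s * (s - 1) / 2) * qBinom q (j + 1) s *
          ρ ^ s * qHermite q (j + 1 - s) y * Γ (i + s) -
        qNat q (j + 1) * ∑ s ∈ Finset.range (j + 1), (-1 : ℝ) ^ s * q ^ (s * (s - 1) / 2) *
          qBinom q j s * ρ ^ s * qHermite q (j - s) y * Γ (i + s) -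
        ρ * q ^ (j + 1) * ∑ s ∈ Finset.range (j + 2), (-1 : ℝ) ^ s * q ^ (s * (s - 1) / 2) *
          qBinom q (j + 1) s * ρ ^ s * qHermite q (j + 1 - s) y * Γ (i + 1 + s) := by
  -- abbreviations
  set A : ℕ → ℝ := fun s => (-1 : ℝ) ^ s * q ^ (s * (s - 1) / 2) * qBinom q (j + 1) s *
    ρ ^ s * qHermite q (j + 2 - s) y * Γ (i + s) with hA
  -- Step 1: y * Σ1 = Σ A + qNat (j+1) * Σ2ext
  have step1 : ∀ s ∈ Finset.range (j + 2),
      y * ((-1 : ℝ) ^ s * q ^ (s * (s - 1) / 2) * qBinom q (j + 1) s * ρ ^ s *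
        qHermite q (j + 1 - s) y * Γ (i + s)) =
      A s + qNat q (j + 1) * ((-1 : ℝ) ^ s * q ^ (s * (s - 1) / 2) * qBinom q j s * ρ ^ s *
        qHermite q (j - s) y * Γ (i + s)) := by
    intro s hs
    have hsj : s ≤ j + 1 := by have := Finset.mem_range.1 hs; omega
    have hH := qHermite_succ (q := q) (j + 1 - s) y
    rw [show j + 1 - s + 1 = j + 2 - s by omega, show j + 1 - s - 1 = j - s by omega] at hH
    have hp2 := qP2 hq (j := j) (s := s) hsj
    rw [hA]
    dsimp only
    linear_combination (-((-1 : ℝ) ^ s * q ^ (s * (s - 1) / 2) * ρ ^ s * Γ (i + s)) *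
        qBinom q (j + 1) s) * hH +
      ((-1 : ℝ) ^ s * q ^ (s * (s - 1) / 2) * ρ ^ s * Γ (i + s) * qHermite q (j - s) y) * hp2
  have e1 : y * ∑ s ∈ Finset.range (j + 2), (-1 : ℝ) ^ s * q ^ (s * (s - 1) / 2) *
      qBinom q (j + 1) s * ρ ^ s * qHermite q (j + 1 - s) y * Γ (i + s) =
      ∑ s ∈ Finset.range (j + 2), A s +
      qNat q (j + 1) * ∑ s ∈ Finset.range (j + 2), (-1 : ℝ) ^ s * q ^ (s * (s - 1) / 2) *
        qBinom q j s * ρ ^ s * qHermite q (j - s) y * Γ (i + s) := by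
    rw [Finset.mul_sum, Finset.mul_sum, ← Finset.sum_add_distrib]
    exact Finset.sum_congr rfl step1
  have e2 : ∑ s ∈ Finset.range (j + 2), (-1 : ℝ) ^ s * q ^ (s * (s - 1) / 2) *
      qBinom q j s * ρ ^ s * qHermite q (j - s) y * Γ (i + s) =
      ∑ s ∈ Finset.range (j + 1), (-1 : ℝ) ^ s * q ^ (s * (s - 1) / 2) *
      qBinom q j s * ρ ^ s * qHermite q (j - s) y * Γ (i + s) := by
    rw [Finset.sum_range_succ, qBinom_eq_zero (Nat.lt_succ_self j)]
    simp
  -- Step 3: split LHS and Σ A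
  have lhs_split : ∑ s ∈ Finset.range (j + 3), (-1 : ℝ) ^ s * q ^ (s * (s - 1) / 2) *
      qBinom q (j + 2) s * ρ ^ s * qHermite q (j + 2 - s) y * Γ (i + s) =
      (∑ s ∈ Finset.range (j + 2), (-1 : ℝ) ^ (s + 1) * q ^ ((s + 1) * (s + 1 - 1) / 2) *
        qBinom q (j + 2) (s + 1) * ρ ^ (s + 1) * qHermite q (j + 2 - (s + 1)) y *
        Γ (i + (s + 1))) +
      (-1 : ℝ) ^ 0 * q ^ (0 * (0 - 1) / 2) * qBinom q (j + 2) 0 * ρ ^ 0 *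
        qHermite q (j + 2 - 0) y * Γ (i + 0) :=
    Finset.sum_range_succ' _ _
  have A_split : ∑ s ∈ Finset.range (j + 2), A s =
      (∑ s ∈ Finset.range (j + 1), A (s + 1)) + A 0 := Finset.sum_range_succ' _ _
  have A_ext : ∑ s ∈ Finset.range (j + 1), A (s + 1) =
      ∑ s ∈ Finset.range (j + 2), A (s + 1) := by
    rw [Finset.sum_range_succ (fun s => A (s + 1)) (j + 1)]
    have : A (j + 2) = 0 := by
      rw [hA]
      dsimp only
      rw [qBinom_eq_zero (by omega)]
      ring
    rw [this, add_zero]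
  -- pointwise identity for the shifted terms
  have point : ∀ s ∈ Finset.range (j + 2),
      (-1 : ℝ) ^ (s + 1) * q ^ ((s + 1) * (s + 1 - 1) / 2) * qBinom q (j + 2) (s + 1) *
        ρ ^ (s + 1) * qHermite q (j + 2 - (s + 1)) y * Γ (i + (s + 1)) =
      A (s + 1) - ρ * q ^ (j + 1) * ((-1 : ℝ) ^ s * q ^ (s * (s - 1) / 2) *
        qBinom q (j + 1) s * ρ ^ s * qHermite q (j + 1 - s) y * Γ (i + 1 + s)) := by
    intro s hs
    have hsj : s ≤ j + 1 := by have := Finset.mem_range.1 hs; omega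
    have hp := qPascal hq (n := j + 1) (k := s) hsj
    have htri : (s + 1) * (s + 1 - 1) / 2 = s * (s - 1) / 2 + s := by
      rw [show s + 1 - 1 = s from rfl]; exact triangle_succ s
    have hqq : q ^ s * q ^ (j + 1 - s) = q ^ (j + 1) := by
      rw [← pow_add]; congr 1; omega
    rw [hA]
    dsimp only
    rw [htri, pow_add, show j + 2 - (s + 1) = j + 1 - s by omega,
      show i + (s + 1) = i + 1 + s by omega, hp]
    linear_combination ((-1 : ℝ) ^ (s + 1) * q ^ (s * (s - 1) / 2) * qBinom q (j + 1) s *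
      ρ ^ (s + 1) * qHermite q (j + 1 - s) y * Γ (i + 1 + s)) * hqq
  -- assemble
  have hms : ∑ s ∈ Finset.range (j + 2), ρ * q ^ (j + 1) * ((-1 : ℝ) ^ s *
      q ^ (s * (s - 1) / 2) * qBinom q (j + 1) s * ρ ^ s * qHermite q (j + 1 - s) y *
      Γ (i + 1 + s)) =
      ρ * q ^ (j + 1) * ∑ s ∈ Finset.range (j + 2), (-1 : ℝ) ^ s *
      q ^ (s * (s - 1) / 2) * qBinom q (j + 1) s * ρ ^ s * qHermite q (j + 1 - s) y *
      Γ (i + 1 + s) := (Finset.mul_sum _ _ _).symm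
  have final : ∑ s ∈ Finset.range (j + 2), (-1 : ℝ) ^ (s + 1) * q ^ ((s + 1) * (s + 1 - 1) / 2) *
      qBinom q (j + 2) (s + 1) * ρ ^ (s + 1) * qHermite q (j + 2 - (s + 1)) y *
      Γ (i + (s + 1)) =
      ∑ s ∈ Finset.range (j + 2), (A (s + 1) - ρ * q ^ (j + 1) * ((-1 : ℝ) ^ s *
        q ^ (s * (s - 1) / 2) * qBinom q (j + 1) s * ρ ^ s * qHermite q (j + 1 - s) y *
        Γ (i + 1 + s))) := Finset.sum_congr rfl point
  have hA0 : A 0 = (-1 : ℝ) ^ 0 * q ^ (0 * (0 - 1) / 2) * qBinom q (j + 2) 0 * ρ ^ 0 *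
      qHermite q (j + 2 - 0) y * Γ (i + 0) := by
    rw [hA]
    dsimp only
    rw [qBinom_zero_right hq, qBinom_zero_right hq]
  rw [lhs_split, final, Finset.sum_sub_distrib, e1, ← e2, A_split, A_ext, hms, ← hA0]
  ring

end Rkey
section Main

variable {q ρ x y : ℝ}

lemma gammaPM_eq_R (hq : |q| < 1) (hρ : |ρ| < 1) (hx : x ∈ Sq q) (hy : y ∈ Sq q) :
    ∀ j i, gammaPM q ρ i j x y =
      ∑ s ∈ Finset.range (j + 1), (-1 : ℝ) ^ s * q ^ (s * (s - 1) / 2) * qBinom q j s *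
        ρ ^ s * qHermite q (j - s) y * gammaPM q ρ (i + s) 0 x y := by
  have key : ∀ j, (∀ i, gammaPM q ρ i j x y =
      ∑ s ∈ Finset.range (j + 1), (-1 : ℝ) ^ s * q ^ (s * (s - 1) / 2) * qBinom q j s *
        ρ ^ s * qHermite q (j - s) y * gammaPM q ρ (i + s) 0 x y) ∧
      (∀ i, gammaPM q ρ i (j + 1) x y =
      ∑ s ∈ Finset.range (j + 2), (-1 : ℝ) ^ s * q ^ (s * (s - 1) / 2) * qBinom q (j + 1) s *
        ρ ^ s * qHermite q (j + 1 - s) y * gammaPM q ρ (i + s) 0 x y) := by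
    intro j
    induction j with
    | zero =>
      constructor
      · intro i
        rw [Finset.sum_range_one, qBinom_zero_right hq]
        show gammaPM q ρ i 0 x y =
          (-1 : ℝ) ^ 0 * q ^ 0 * 1 * ρ ^ 0 * qHermite q 0 y * gammaPM q ρ (i + 0) 0 x y
        show gammaPM q ρ i 0 x y = (-1 : ℝ) ^ 0 * q ^ 0 * 1 * ρ ^ 0 * 1 * gammaPM q ρ (i + 0) 0 x y
        rw [Nat.add_zero]
        ring
      · intro i
        rw [Finset.sum_range_succ, Finset.sum_range_one, qBinom_zero_right hq, qBinom_self hq]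
        show gammaPM q ρ i 1 x y =
          (-1 : ℝ) ^ 0 * q ^ 0 * 1 * ρ ^ 0 * qHermite q 1 y * gammaPM q ρ (i + 0) 0 x y +
          (-1 : ℝ) ^ 1 * q ^ (1 * (1 - 1) / 2) * 1 * ρ ^ 1 * qHermite q 0 y *
            gammaPM q ρ (i + 1) 0 x y
        rw [Nat.add_zero, gammaPM_Ry0 hq hρ hx hy i]
        show y * gammaPM q ρ i 0 x y - ρ * gammaPM q ρ (i + 1) 0 x y =
          (-1 : ℝ) ^ 0 * q ^ 0 * 1 * ρ ^ 0 * y * gammaPM q ρ i 0 x y +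
          (-1 : ℝ) ^ 1 * q ^ 0 * 1 * ρ ^ 1 * 1 * gammaPM q ρ (i + 1) 0 x y
        ring
    | succ j ih =>
      refine ⟨ih.2, ?_⟩
      intro i
      rw [gammaPM_Ryp hq hρ hx hy i j, ih.1 i, ih.2 i, ih.2 (i + 1)]
      have hR := Rkey hq ρ y (fun m => gammaPM q ρ m 0 x y) i j
      have e1 : ∀ s : ℕ, i + 1 + s = i + s + 1 := fun s => by omega
      calc y * ∑ s ∈ Finset.range (j + 2), (-1 : ℝ) ^ s * q ^ (s * (s - 1) / 2) *
            qBinom q (j + 1) s * ρ ^ s * qHermite q (j + 1 - s) y *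
            gammaPM q ρ (i + s) 0 x y -
          qNat q (j + 1) * ∑ s ∈ Finset.range (j + 1), (-1 : ℝ) ^ s * q ^ (s * (s - 1) / 2) *
            qBinom q j s * ρ ^ s * qHermite q (j - s) y * gammaPM q ρ (i + s) 0 x y -
          ρ * q ^ (j + 1) * ∑ s ∈ Finset.range (j + 2), (-1 : ℝ) ^ s * q ^ (s * (s - 1) / 2) *
            qBinom q (j + 1) s * ρ ^ s * qHermite q (j + 1 - s) y *
            gammaPM q ρ (i + 1 + s) 0 x y
          = ∑ s ∈ Finset.range (j + 3), (-1 : ℝ) ^ s * q ^ (s * (s - 1) / 2) *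
            qBinom q (j + 2) s * ρ ^ s * qHermite q (j + 2 - s) y *
            gammaPM q ρ (i + s) 0 x y := hR.symm
        _ = ∑ s ∈ Finset.range (j + 1 + 1 + 1), (-1 : ℝ) ^ s * q ^ (s * (s - 1) / 2) *
            qBinom q (j + 1 + 1) s * ρ ^ s * qHermite q (j + 1 + 1 - s) y *
            gammaPM q ρ (i + s) 0 x y := rfl
  exact fun j => (key j).1

end Main

/-- γ_{i,j}(x,y|ρ,q) = Q_{i,j}(x,y|ρ,q) · γ_{0,0}(x,y|ρ,q). -/
theorem statement4 (q ρ x y : ℝ) (hq : |q| < 1) (hρ : |ρ| < 1)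
    (hx : x ∈ Sq q) (hy : y ∈ Sq q) (i j : ℕ) :
    gammaPM q ρ i j x y = Qpoly q ρ i j x y * gammaPM q ρ 0 0 x y := by
  rw [gammaPM_eq_R hq hρ hx hy j i, Qpoly, Finset.sum_mul]
  refine Finset.sum_congr rfl fun s _ => ?_
  rw [gammaPM_i0 hq hρ hx hy (i + s)]
  ring
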